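/- In the grid-like frame G, the predicate mid₂(u) := ∃s t, u R₂ s ∧ s R₂ t holds exactly for the worlds u = U(x,y) with x+y even, and mid₁(u) := ∃s t, u R₁ s ∧ s R₁ t holds exactly for the worlds u = U(x,y) with x+y odd. -/
import Mathlib

inductive GW : Type where
  | P : ℤ → ℤ → GW
  | U : ℤ → ℤ → GW
  | S : ℤ → ℤ → GW
  | T : ℤ → ℤ → GW
deriving DecidableEq

def Apairs (x y : ℤ) (a b : GW) : Prop :=
  (a = .P x y ∧ b = .P (x+1) y) ∨ (a = .P x y ∧ b = .P x (y+1)) ∨ (a = .P x y ∧ b = .U x y)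

def Bpairs (x y : ℤ) (a b : GW) : Prop :=
  (a = .U x y ∧ b = .P (x+1) (y+1)) ∨ (a = .U x y ∧ b = .S x y) ∨
  (a = .S x y ∧ b = .T x y) ∨ (a = .U x y ∧ b = .T x y) ∨
  (a = .P (x+1) y ∧ b = .P (x+1) (y+1)) ∨ (a = .P x (y+1) ∧ b = .P (x+1) (y+1))

/-- R₁ of the grid-like frame G. -/
def R1 (a b : GW) : Prop :=
  ∃ x y : ℤ, (Even (x+y) ∧ Apairs x y a b) ∨ (¬ Even (x+y) ∧ Bpairs x y a b)

/-- R₂ of the grid-like frame G. -/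
def R2 (a b : GW) : Prop :=
  ∃ x y : ℤ, (Even (x+y) ∧ Bpairs x y a b) ∨ (¬ Even (x+y) ∧ Apairs x y a b)

theorem grid_mid_characterization :
    (∀ u : GW, (∃ s t : GW, R2 u s ∧ R2 s t) ↔ ∃ x y : ℤ, u = .U x y ∧ Even (x + y)) ∧
    (∀ u : GW, (∃ s t : GW, R1 u s ∧ R1 s t) ↔ ∃ x y : ℤ, u = .U x y ∧ ¬ Even (x + y)) := by
  constructor
  · intro u
    constructor
    · rintro ⟨s, t, ⟨x, y, h1⟩, ⟨x', y', h2⟩⟩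
      simp only [Apairs, Bpairs, Int.even_iff] at h1 h2 ⊢
      rcases h1 with ⟨he, (⟨rfl,rfl⟩|⟨rfl,rfl⟩|⟨rfl,rfl⟩|⟨rfl,rfl⟩|⟨rfl,rfl⟩|⟨rfl,rfl⟩)⟩ |
        ⟨he, (⟨rfl,rfl⟩|⟨rfl,rfl⟩|⟨rfl,rfl⟩)⟩ <;>
      rcases h2 with ⟨he', (h|h|h|h|h|h)⟩ | ⟨he', (h|h|h)⟩ <;>
        simp_all <;> (try obtain ⟨⟨rfl, rfl⟩, rfl⟩ := h) <;> first | omega | exact ⟨_, _, rfl, by omega⟩ | exact ⟨_, _, ⟨rfl, rfl⟩, by omega⟩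
    · rintro ⟨x, y, rfl, he⟩
      exact ⟨.S x y, .T x y,
        ⟨x, y, Or.inl ⟨he, Or.inr (Or.inl ⟨rfl, rfl⟩)⟩⟩,
        ⟨x, y, Or.inl ⟨he, Or.inr (Or.inr (Or.inl ⟨rfl, rfl⟩))⟩⟩⟩
  · intro u
    constructor
    · rintro ⟨s, t, ⟨x, y, h1⟩, ⟨x', y', h2⟩⟩
      simp only [Apairs, Bpairs, Int.even_iff] at h1 h2 ⊢
      rcases h1 with ⟨he, (⟨rfl,rfl⟩|⟨rfl,rfl⟩|⟨rfl,rfl⟩)⟩ |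
        ⟨he, (⟨rfl,rfl⟩|⟨rfl,rfl⟩|⟨rfl,rfl⟩|⟨rfl,rfl⟩|⟨rfl,rfl⟩|⟨rfl,rfl⟩)⟩ <;>
      rcases h2 with ⟨he', (h|h|h)⟩ | ⟨he', (h|h|h|h|h|h)⟩ <;>
        simp_all <;> (try obtain ⟨⟨rfl, rfl⟩, rfl⟩ := h) <;> first | omega | exact ⟨_, _, rfl, by omega⟩ | exact ⟨_, _, ⟨rfl, rfl⟩, by omega⟩
    · rintro ⟨x, y, rfl, he⟩
      exact ⟨.S x y, .T x y,
        ⟨x, y, Or.inr ⟨he, Or.inr (Or.inl ⟨rfl, rfl⟩)⟩⟩,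
        ⟨x, y, Or.inr ⟨he, Or.inr (Or.inr (Or.inl ⟨rfl, rfl⟩))⟩⟩⟩
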